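/- arXiv:0707.2327 — 2 statements merged into one kernel-verified Lean document; each statement's English description precedes it below -/
import Mathlib

section
/- Let K be a totally ordered field and B a subring, and let R = {x ∈ K : ∃ z ∈ B, |x| ≤ z}. Then M = {x ∈ K : ∀ z ∈ B, z ≠ 0 → |x| < 1/|z|} is the unique maximal ideal of the valuation ring R. -/
/-- The convex hull of a subring `B` in a linearly ordered field `K`. -/
def convexHullSubring {K : Type*} [Field K] [LinearOrder K] [IsStrictOrderedRing K] (B : Subring K) : Subring K where
  carrier := {x : K | ∃ z ∈ B, |x| ≤ z}
  zero_mem' := ⟨0, B.zero_mem, by simp⟩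
  one_mem' := ⟨1, B.one_mem, by simp⟩
  add_mem' := by
    rintro a b ⟨z₁, hz₁, h₁⟩ ⟨z₂, hz₂, h₂⟩
    exact ⟨z₁ + z₂, B.add_mem hz₁ hz₂, (abs_add_le a b).trans (add_le_add h₁ h₂)⟩
  neg_mem' := by
    rintro a ⟨z, hz, h⟩
    exact ⟨z, hz, by simpa using h⟩
  mul_mem' := by
    rintro a b ⟨z₁, hz₁, h₁⟩ ⟨z₂, hz₂, h₂⟩
    refine ⟨z₁ * z₂, B.mul_mem hz₁ hz₂, ?_⟩
    rw [abs_mul]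
    exact mul_le_mul h₁ h₂ (abs_nonneg b) ((abs_nonneg a).trans h₁)

theorem convexHull_abs_mem {K : Type*} [Field K] [LinearOrder K] [IsStrictOrderedRing K] (B : Subring K)
    {z : K} (hz : z ∈ B) : |z| ∈ B := by
  rcases abs_choice z with h | h
  · rw [h]; exact hz
  · rw [h]; exact B.neg_mem hz

/-- The maximal ideal of the convex hull. -/
def convexMaxIdeal {K : Type*} [Field K] [LinearOrder K] [IsStrictOrderedRing K] (B : Subring K) :
    Ideal (convexHullSubring B) where
  carrier := {x | ∀ z ∈ B, z ≠ 0 → |(x : K)| < 1 / |z|}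
  zero_mem' := by
    intro z hz hz0
    simp only [ZeroMemClass.coe_zero, abs_zero]
    positivity
  add_mem' := by
    rintro a b ha hb z hzB hz0
    have h2B : (2 : K) ∈ B := by
      rw [show (2 : K) = 1 + 1 by norm_num]; exact B.add_mem B.one_mem B.one_mem
    have h2z : (2 : K) * z ∈ B := B.mul_mem h2B hzB
    have h2z0 : (2 : K) * z ≠ 0 := by simp [hz0]
    have ha' := ha _ h2z h2z0
    have hb' := hb _ h2z h2z0
    have habs2 : |(2 : K) * z| = 2 * |z| := by rw [abs_mul]; norm_num
    rw [habs2] at ha' hb'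
    have hzpos : (0 : K) < |z| := abs_pos.mpr hz0
    calc |((a + b : convexHullSubring B) : K)| ≤ |(a : K)| + |(b : K)| := by
          push_cast; exact abs_add_le _ _
      _ < 1 / (2 * |z|) + 1 / (2 * |z|) := add_lt_add ha' hb'
      _ = 1 / |z| := by
          rw [← add_div, eq_div_iff hzpos.ne', div_mul_eq_mul_div,
            mul_comm 2 |z|, mul_div_assoc]
          field_simp
          ring
  smul_mem' := by
    rintro ⟨r, w, hwB, hrw⟩ x hx z hzB hz0
    have hw1B : |w| + 1 ∈ B := B.add_mem (convexHull_abs_mem B hwB) B.one_mem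
    have hw1pos : (0 : K) < |w| + 1 := by positivity
    have hzw : z * (|w| + 1) ∈ B := B.mul_mem hzB hw1B
    have hzw0 : z * (|w| + 1) ≠ 0 := mul_ne_zero hz0 (ne_of_gt hw1pos)
    have hx' := hx _ hzw hzw0
    have hzpos : (0 : K) < |z| := abs_pos.mpr hz0
    have habs : |z * (|w| + 1)| = |z| * (|w| + 1) := by
      rw [abs_mul, abs_of_pos hw1pos]
    rw [habs] at hx'
    have hr : |r| ≤ |w| + 1 := hrw.trans ((le_abs_self w).trans (by linarith))
    have hxnn : (0 : K) ≤ |(x : K)| := abs_nonneg _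
    calc |(((⟨r, w, hwB, hrw⟩ : convexHullSubring B) • x : convexHullSubring B) : K)|
        = |r| * |(x : K)| := by rw [smul_eq_mul]; push_cast; rw [abs_mul]
      _ ≤ (|w| + 1) * |(x : K)| := mul_le_mul_of_nonneg_right hr hxnn
      _ < (|w| + 1) * (1 / (|z| * (|w| + 1))) := mul_lt_mul_of_pos_left hx' hw1pos
      _ = 1 / |z| := by field_simp

theorem convexMaxIdeal_isUnit {K : Type*} [Field K] [LinearOrder K] [IsStrictOrderedRing K] (B : Subring K)
    (x : convexHullSubring B) (hx : x ∉ convexMaxIdeal B) : IsUnit x := by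
  have hx' : ¬ ∀ z ∈ B, z ≠ 0 → |(x : K)| < 1 / |z| := hx
  push_neg at hx'
  obtain ⟨z, hzB, hz0, hle⟩ := hx'
  have hzpos : (0 : K) < |z| := abs_pos.mpr hz0
  have hx0 : (x : K) ≠ 0 := by
    intro h
    rw [h, abs_zero] at hle
    have : (0 : K) < 1 / |z| := by positivity
    linarith
  have hxpos : (0 : K) < |(x : K)| := abs_pos.mpr hx0
  have hinvle : |(x : K)⁻¹| ≤ |z| := by
    rw [abs_inv, inv_le_comm₀ hxpos hzpos, ← one_div]
    exact hle
  have hinvR : (x : K)⁻¹ ∈ convexHullSubring B := ⟨|z|, convexHull_abs_mem B hzB, hinvle⟩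
  refine ⟨⟨x, ⟨(x : K)⁻¹, hinvR⟩, ?_, ?_⟩, rfl⟩
  · ext; push_cast; exact mul_inv_cancel₀ hx0
  · ext; push_cast; exact inv_mul_cancel₀ hx0

/-- `M = {x ∈ K : ∀ z ∈ B, z ≠ 0 → |x| < 1/|z|}` is the unique maximal ideal of the
valuation ring `R = {x ∈ K : ∃ z ∈ B, |x| ≤ z}` (the convex hull of `B` in `K`). -/
theorem convexHull_unique_maximalIdeal {K : Type*} [Field K] [LinearOrder K] [IsStrictOrderedRing K] (B : Subring K) :
    ∃ M : Ideal (convexHullSubring B),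
      (∀ x : convexHullSubring B, x ∈ M ↔ ∀ z ∈ B, z ≠ 0 → |(x : K)| < 1 / |z|) ∧
      M.IsMaximal ∧ ∀ M' : Ideal (convexHullSubring B), M'.IsMaximal → M' = M := by
  have hmax : (convexMaxIdeal B).IsMaximal := by
    rw [Ideal.isMaximal_iff]
    constructor
    · intro h1
      have := h1 1 B.one_mem one_ne_zero
      simp at this
    · intro J x hMJ hxM hxJ
      obtain ⟨u, hu⟩ := convexMaxIdeal_isUnit B x hxM
      have : (u⁻¹ : (convexHullSubring B)ˣ) * x ∈ J := J.mul_mem_left _ hxJ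
      rwa [← hu, u.inv_mul] at this
  refine ⟨convexMaxIdeal B, fun x => Iff.rfl, hmax, ?_⟩
  intro M' hM'
  have hle : M' ≤ convexMaxIdeal B := by
    intro x hxM'
    by_contra hxM
    have := convexMaxIdeal_isUnit B x hxM
    exact hM'.ne_top (M'.eq_top_of_isUnit_mem hxM' this)
  exact hM'.eq_of_le hmax.ne_top hle
end

section
/- Let G be an ordered abelian group of finite rank r with chain of convex subgroups (0) = Δ_r ⊊ Δ_{r−1} ⊊ ⋯ ⊊ Δ₀ = G, and let a₁, …, a_ℓ ∈ G be scalewise ℚ-linearly independent (meaning: for each q, the elements a_i lying in Δ_q ∖ Δ_{q+1} have ℚ-linearly independent images in Δ_q/Δ_{q+1}). Let λ : G → G' be a homomorphism of ordered abelian groups. Then the following are equivalent: (i) λ(a₁), …, λ(a_ℓ) are ℚ-linearly independent; (ii) λ(a_j) ≠ 0 for all j. -/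
/-- A subgroup `H` of an ordered abelian group is convex (isolated) if
`0 ≤ a ≤ b` and `b ∈ H` imply `a ∈ H`. -/
def AddSubgroup.IsConvex {G : Type*} [AddCommGroup G] [LinearOrder G] [IsOrderedAddMonoid G] (H : AddSubgroup G) : Prop :=
  ∀ a b : G, 0 ≤ a → a ≤ b → b ∈ H → a ∈ H

/-- Let `G` be an ordered abelian group of finite rank `r`, with chain of convex subgroups
`(0) = Δ_r ⊊ ⋯ ⊊ Δ_0 = G`, and let `a₁, …, a_ℓ ∈ G` be scalewise `ℚ`-linearly independent
(for each `q`, the `aᵢ` lying in `Δ_q ∖ Δ_{q+1}` have `ℚ`-linearly independent images in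
`Δ_q/Δ_{q+1}`).  Let `λ : G → G'` be an (order-preserving) homomorphism of ordered abelian
groups.  Then `λ(a₁), …, λ(a_ℓ)` are `ℚ`-linearly independent iff they are all nonzero. -/
theorem scalewise_indep_image_indep_iff_ne_zero
    {G G' : Type*} [AddCommGroup G] [LinearOrder G] [IsOrderedAddMonoid G]
    [AddCommGroup G'] [LinearOrder G'] [IsOrderedAddMonoid G']
    (r : ℕ) (Δ : Fin (r + 1) → AddSubgroup G)
    (hconv : ∀ q, (Δ q).IsConvex)
    (htop : Δ 0 = ⊤) (hbot : Δ (Fin.last r) = ⊥)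
    (hchain : StrictAnti Δ)
    (hall : ∀ H : AddSubgroup G, H.IsConvex → ∃ q, H = Δ q)
    (ℓ : ℕ) (a : Fin ℓ → G) (ha : ∀ i, a i ≠ 0)
    (hscale : ∀ (q : Fin r) (m : Fin ℓ → ℤ),
      (∀ i, m i ≠ 0 → a i ∈ Δ q.castSucc ∧ a i ∉ Δ q.succ) →
      (∑ i, m i • a i) ∈ Δ q.succ → ∀ i, m i = 0)
    (lam : G →+ G') (hmono : Monotone lam) :
    (∀ m : Fin ℓ → ℤ, (∑ i, m i • lam (a i)) = 0 → ∀ i, m i = 0) ↔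
      ∀ i, lam (a i) ≠ 0 := by
  classical
  have hanti : Antitone Δ := hchain.antitone
  constructor
  · -- independence → nonzero
    intro hind i hzero
    have h1 : (∑ j, (fun j => if j = i then (1:ℤ) else 0) j • lam (a j)) = 0 := by
      rw [Finset.sum_eq_single i]
      · simp [hzero]
      · intro j _ hj; simp [hj]
      · intro h; exact absurd (Finset.mem_univ i) h
    have := hind (fun j => if j = i then (1:ℤ) else 0) h1 i
    simp at this
  · -- nonzero → independence
    intro hne
    -- the kernel of lam is convex, hence equals some Δ p
    have hker : (lam.ker).IsConvex := by
      intro x y hx hxy hy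
      have h0 : lam x ≤ lam y := hmono hxy
      have h0' : lam 0 ≤ lam x := hmono hx
      rw [AddMonoidHom.mem_ker] at hy ⊢
      rw [map_zero] at h0'
      rw [hy] at h0
      exact le_antisymm h0 h0'
    obtain ⟨p, hp⟩ := hall lam.ker hker
    have hnotker : ∀ i, a i ∉ Δ p := fun i hi => hne i (by rw [← hp] at hi; exact hi)
    -- define levels
    have hexlvl : ∀ i : Fin ℓ, ∃ q : Fin r, a i ∈ Δ q.castSucc ∧ a i ∉ Δ q.succ := by
      intro i
      let S : Finset (Fin (r+1)) := Finset.univ.filter (fun q => a i ∈ Δ q)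
      have h0 : (0 : Fin (r+1)) ∈ S := by
        simp only [S, Finset.mem_filter, Finset.mem_univ, true_and, htop]
        exact AddSubgroup.mem_top _
      have hSne : S.Nonempty := ⟨0, h0⟩
      set q := S.max' hSne with hqdef
      have hqmem : a i ∈ Δ q := by
        have := S.max'_mem hSne
        simpa only [S, Finset.mem_filter, Finset.mem_univ, true_and] using this
      have hqlt : (q : ℕ) < r := by
        by_contra h
        have hq' : q = Fin.last r := by
          apply Fin.ext
          have := q.isLt
          simp only [Fin.val_last]
          omega
        rw [hq', hbot] at hqmem
        exact ha i (by simpa using hqmem)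
      refine ⟨⟨q.val, hqlt⟩, ?_, ?_⟩
      · have : Fin.castSucc ⟨q.val, hqlt⟩ = q := by ext; simp
        rw [this]; exact hqmem
      · intro hmem
        have hmemS : Fin.succ ⟨q.val, hqlt⟩ ∈ S := by
          simp only [S, Finset.mem_filter, Finset.mem_univ, true_and]
          exact hmem
        have := S.le_max' _ hmemS
        rw [← hqdef] at this
        have : (q : ℕ) + 1 ≤ (q : ℕ) := this
        omega
    choose lvl hlvl1 hlvl2 using hexlvl
    intro m hsum
    by_contra hcon
    push_neg at hcon
    obtain ⟨i₁, hi₁⟩ := hcon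
    -- T: indices with nonzero coefficient
    set T : Finset (Fin ℓ) := Finset.univ.filter (fun i => m i ≠ 0) with hT
    have hTne : T.Nonempty := ⟨i₁, by simp [hT, hi₁]⟩
    obtain ⟨i₀, hi₀T, hi₀min⟩ := T.exists_min_image lvl hTne
    have hmi₀ : m i₀ ≠ 0 := by simpa [hT] using hi₀T
    set q : Fin r := lvl i₀ with hqdef
    -- Δ p ≤ Δ q.succ
    have hple : q.succ ≤ p := by
      by_contra h
      push_neg at h
      have h1 : (p:ℕ) < (q:ℕ) + 1 := by
        have := Fin.lt_def.mp h
        simpa [Fin.val_succ] using this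
      have hle : p ≤ q.castSucc := by
        rw [Fin.le_def, Fin.coe_castSucc]
        omega
      have : a i₀ ∈ Δ p := hanti hle (hlvl1 i₀)
      exact hnotker i₀ this
    -- Σ m i a i ∈ ker = Δ p
    have hsum' : (∑ i, m i • a i) ∈ Δ p := by
      rw [← hp, AddMonoidHom.mem_ker, map_sum]
      rw [← hsum]
      congr 1
      ext i
      rw [map_zsmul]
    have hsumq : (∑ i, m i • a i) ∈ Δ q.succ := hanti hple hsum'
    -- new coefficients
    set m' : Fin ℓ → ℤ := fun i => if lvl i = q then m i else 0 with hm'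
    have hcond : ∀ i, m' i ≠ 0 → a i ∈ Δ q.castSucc ∧ a i ∉ Δ q.succ := by
      intro i hi
      simp only [hm'] at hi
      by_cases h : lvl i = q
      · rw [← h]; exact ⟨hlvl1 i, hlvl2 i⟩
      · simp [h] at hi
    have hdiff : (∑ i, (m i - m' i) • a i) ∈ Δ q.succ := by
      apply AddSubgroup.sum_mem
      intro i _
      by_cases h : lvl i = q
      · have h0 : m i - m' i = 0 := by simp [hm', h]
        rw [h0, zero_zsmul]; exact zero_mem _
      · by_cases hmi : m i = 0
        · have h0 : m i - m' i = 0 := by simp [hm', h, hmi]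
          rw [h0, zero_zsmul]; exact zero_mem _
        · simp only [hm', if_neg h, sub_zero]
          apply AddSubgroup.zsmul_mem
          have hlt : q < lvl i := by
            have := hi₀min i (by simp [hT, hmi])
            exact lt_of_le_of_ne this (fun hc => h hc.symm)
          have hle : q.succ ≤ (lvl i).castSucc := by
            apply Fin.le_def.mpr
            simp only [Fin.val_succ, Fin.coe_castSucc]
            exact Fin.lt_def.mp hlt
          exact hanti hle (hlvl1 i)
    have hsumm' : (∑ i, m' i • a i) ∈ Δ q.succ := by
      have : (∑ i, m' i • a i) = (∑ i, m i • a i) - (∑ i, (m i - m' i) • a i) := by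
        rw [← Finset.sum_sub_distrib]
        congr 1; ext i
        rw [← sub_smul]; ring_nf
      rw [this]
      exact AddSubgroup.sub_mem _ hsumq hdiff
    have hz := hscale q m' hcond hsumm' i₀
    have hz' : m' i₀ = m i₀ := by simp [hm', hqdef.symm]
    rw [hz'] at hz
    exact hmi₀ hz
end
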